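/- Fix α > 0, μ > 0, β > 0, O₁ = (−β,0,…,0) and O₂ = (β,0,…,0). For H ∈ {2,3}, let λ_{H,∞} denote the infimum over φ ∈ E with ∫φ² = 1 of (μ²/2)∫‖∇φ‖² − ∫ R_H φ², where R₂ = (r₁+r₂)/2 and R₃ = (r₁+r₂+r₃)/3, with r₃ the fitness associated to a third optimum O₃ ∈ ℝⁿ. Then the region Λ_∞ := { O₃ ∈ ℝⁿ : λ_{3,∞}(α,μ,O₁,O₂,O₃) < λ_{2,∞}(α,μ,O₁,O₂) } is exactly the open Euclidean ball B(𝒪, √(3/2)·β) centered at the origin 𝒪 = (0,…,0) of radius √(3/2)·β; i.e., λ_{3,∞}(α,μ,O₁,O₂,O₃) < λ_{2,∞}(α,μ,O₁,O₂) if and only if ‖O₃‖ < √(3/2)·β. -/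

import Mathlib

open MeasureTheory Real Filter Topology

noncomputable section

namespace MigrationAdaptation

abbrev Rn (n : ℕ) := EuclideanSpace ℝ (Fin n)

/-- Quadratic (Fisher geometric model) fitness with optimum `O`. -/
def fitness {n : ℕ} (rmax α : ℝ) (O : Rn n) (x : Rn n) : ℝ :=
  rmax - α / 2 * ‖x - O‖ ^ 2

/-- The admissible class `E = H¹(ℝⁿ) ∩ L²_w(ℝⁿ)`. -/
def memE {n : ℕ} (ψ : Rn n → ℝ) : Prop :=
  Integrable (fun x => (ψ x) ^ 2) ∧
  Integrable (fun x => ‖gradient ψ x‖ ^ 2) ∧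
  Integrable (fun x => ‖x‖ ^ 2 * (ψ x) ^ 2)

/-- Rayleigh quotient `Q_H`. -/
def QH {n H : ℕ} (δ μ : ℝ) (r : Fin H → Rn n → ℝ) (Ψ : Fin H → Rn n → ℝ) : ℝ :=
  (∑ i, (μ ^ 2 / 2 * (∫ x, ‖gradient (Ψ i) x‖ ^ 2) - ∫ x, r i x * (Ψ i x) ^ 2)) +
    δ * (1 - ∑ i : Fin H, ∑ j : Fin H,
      if i < j then (2 / ((H : ℝ) - 1)) * ∫ x, Ψ i x * Ψ j x else 0)

/-- Principal eigenvalue `λ_H`, via the Rayleigh formula. -/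
def lambdaH {n : ℕ} (H : ℕ) (δ α μ rmax : ℝ) (O : Fin H → Rn n) : ℝ :=
  sInf {Q : ℝ | ∃ Ψ : Fin H → Rn n → ℝ, (∀ i, memE (Ψ i)) ∧
    (∑ i, ∫ x, (Ψ i x) ^ 2) = 1 ∧ Q = QH δ μ (fun i => fitness rmax α (O i)) Ψ}

/-- `λ₁(α,μ) = μ n √α / 2 - r_max`. -/
def lambda1 (n : ℕ) (α μ rmax : ℝ) : ℝ := μ * n * Real.sqrt α / 2 - rmax

/-- Single-host Rayleigh quotient. -/
def Q1 {n : ℕ} (μ : ℝ) (r : Rn n → ℝ) (ψ : Rn n → ℝ) : ℝ :=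
  μ ^ 2 / 2 * (∫ x, ‖gradient ψ x‖ ^ 2) - ∫ x, r x * (ψ x) ^ 2

/-- Principal eigenvalue for a single host with fitness `r`. -/
def lambdaSingle {n : ℕ} (μ : ℝ) (r : Rn n → ℝ) : ℝ :=
  sInf {Q : ℝ | ∃ ψ : Rn n → ℝ, memE ψ ∧ (∫ x, (ψ x) ^ 2) = 1 ∧ Q = Q1 μ r ψ}

/-- Two-host principal eigenvalue with migration loss `λ̃₂`. -/
def lambda2tilde {n : ℕ} (δ α μ rmax : ℝ) (O1 O2 : Rn n) : ℝ :=
  sInf {Q : ℝ | ∃ ψ1 ψ2 : Rn n → ℝ, memE ψ1 ∧ memE ψ2 ∧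
    (∫ x, (ψ1 x) ^ 2) + (∫ x, (ψ2 x) ^ 2) = 1 ∧
    Q = (μ ^ 2 / 2 * (∫ x, ‖gradient ψ1 x‖ ^ 2) - ∫ x, fitness rmax α O1 x * (ψ1 x) ^ 2) +
        (μ ^ 2 / 2 * (∫ x, ‖gradient ψ2 x‖ ^ 2) - ∫ x, fitness rmax α O2 x * (ψ2 x) ^ 2) +
        δ * (1 - ∫ x, ψ1 x * ψ2 x)}

/-- `λ_H(δ,…)` extended to `δ = 0` by `λ₁(α,μ)`. -/
def lamFull {n : ℕ} (H : ℕ) (δ α μ rmax : ℝ) (O : Fin H → Rn n) : ℝ :=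
  if δ = 0 then lambda1 n α μ rmax else lambdaH H δ α μ rmax O

/-- The Laplacian, as the trace of the second derivative. -/
def lap {n : ℕ} (f : Rn n → ℝ) (x : Rn n) : ℝ :=
  ∑ i : Fin n, fderiv ℝ (fun y => fderiv ℝ f y (EuclideanSpace.single i (1 : ℝ))) x
    (EuclideanSpace.single i (1 : ℝ))

/-- A (classical) solution of the mutation–selection–migration system with initial datum `u0`:
continuity on `[0,∞) × ℝⁿ`, existence and continuity of `∂ₜ u` and of the spatial derivatives
up to order two on `(0,∞) × ℝⁿ`, and the equations. -/
structure IsSolution {n : ℕ} (H : ℕ) (μ δ rmax α : ℝ) (O : Fin H → Rn n)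
    (u0 : Fin H → Rn n → ℝ) (u : Fin H → ℝ → Rn n → ℝ) : Prop where
  init : ∀ i x, u i 0 x = u0 i x
  cont : ∀ i, ContinuousOn (fun p : ℝ × Rn n => u i p.1 p.2)
    (Set.Ici (0:ℝ) ×ˢ (Set.univ : Set (Rn n)))
  contDiff_x : ∀ i, ∀ t > (0:ℝ), ContDiff ℝ 2 (u i t)
  diff_t : ∀ i x, ∀ t > (0:ℝ), DifferentiableAt ℝ (fun s => u i s x) t
  cont_dt : ∀ i, ContinuousOn (fun p : ℝ × Rn n => deriv (fun s => u i s p.2) p.1)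
    (Set.Ioi (0:ℝ) ×ˢ (Set.univ : Set (Rn n)))
  cont_dx : ∀ i, ContinuousOn (fun p : ℝ × Rn n => fderiv ℝ (u i p.1) p.2)
    (Set.Ioi (0:ℝ) ×ˢ (Set.univ : Set (Rn n)))
  cont_dxx : ∀ i, ContinuousOn
    (fun p : ℝ × Rn n => fderiv ℝ (fun y => fderiv ℝ (u i p.1) y) p.2)
    (Set.Ioi (0:ℝ) ×ˢ (Set.univ : Set (Rn n)))
  pde : ∀ i x, ∀ t > (0:ℝ),
    deriv (fun s => u i s x) t =
      μ ^ 2 / 2 * lap (u i t) x +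
      u i t x * (fitness rmax α (O i) x - ∫ y, u i t y) +
      δ * ((1 / ((H : ℝ) - 1)) * (∑ k ∈ Finset.univ.erase i, u k t x) - u i t x)

/-- Pointwise exponential bound `0 ≤ uᵢ(t,x) ≤ K e^{(r_max+1)t - c‖x‖}` for `t ≥ 0`. -/
def ExpBound {n H : ℕ} (K c rmax : ℝ) (u : Fin H → ℝ → Rn n → ℝ) : Prop :=
  ∀ i t x, 0 ≤ t → 0 ≤ u i t x ∧ u i t x ≤ K * Real.exp ((rmax + 1) * t - c * ‖x‖)

/-- The population sizes `t ↦ ∫ uᵢ(t,·)` are locally Lipschitz continuous on `[0,∞)`. -/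
def LocLipMass {n H : ℕ} (u : Fin H → ℝ → Rn n → ℝ) : Prop :=
  ∀ i, ∀ b : ℝ, ∃ L : NNReal, LipschitzOnWith L (fun t => ∫ x, u i t x) (Set.Icc 0 b)


section Aux

variable {n : ℕ}

lemma differentiableAt_comp_add_iff' (ψ : Rn n → ℝ) (a x : Rn n) :
    DifferentiableAt ℝ (fun y => ψ (y + a)) x ↔ DifferentiableAt ℝ ψ (x + a) := by
  constructor
  · intro h
    have h2 : DifferentiableAt ℝ (fun z : Rn n => z - a) (x + a) :=
      (differentiable_id.sub_const a) _
    have h3 : DifferentiableAt ℝ (fun y => ψ (y + a)) ((x + a) - a) := by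
      simpa using h
    have h4 := h3.comp (x + a) h2
    simpa [Function.comp_def] using h4
  · intro h
    have h2 : DifferentiableAt ℝ (fun z : Rn n => z + a) x :=
      (differentiable_id.add_const a) _
    have h4 := h.comp x h2
    simpa [Function.comp_def] using h4

lemma fderiv_comp_add' (ψ : Rn n → ℝ) (a x : Rn n) :
    fderiv ℝ (fun y => ψ (y + a)) x = fderiv ℝ ψ (x + a) := by
  by_cases h : DifferentiableAt ℝ ψ (x + a)
  · have h1 : HasFDerivAt (fun y : Rn n => y + a) (ContinuousLinearMap.id ℝ (Rn n)) x :=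
      (hasFDerivAt_id x).add_const a
    have h2 := (h.hasFDerivAt.comp x h1).fderiv
    simpa [Function.comp_def] using h2
  · rw [fderiv_zero_of_not_differentiableAt h,
      fderiv_zero_of_not_differentiableAt (by rwa [differentiableAt_comp_add_iff'])]

lemma gradient_comp_add' (ψ : Rn n → ℝ) (a x : Rn n) :
    gradient (fun y => ψ (y + a)) x = gradient ψ (x + a) := by
  unfold gradient
  rw [fderiv_comp_add']

lemma memE_comp_add {ψ : Rn n → ℝ} (hψ : memE ψ) (a : Rn n) :
    memE (fun y => ψ (y + a)) := by
  obtain ⟨h1, h2, h3⟩ := hψ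
  refine ⟨h1.comp_add_right a, ?_, ?_⟩
  · have he : (fun x => ‖gradient (fun y => ψ (y + a)) x‖ ^ 2)
        = fun x => ‖gradient ψ (x + a)‖ ^ 2 := by
      funext x; rw [gradient_comp_add']
    rw [he]
    exact h2.comp_add_right a
  · have hg : Integrable (fun x : Rn n => 2 * (‖x + a‖ ^ 2 * ψ (x + a) ^ 2)
        + (2 * ‖a‖ ^ 2) * ψ (x + a) ^ 2) :=
      ((h3.comp_add_right a).const_mul 2).add ((h1.comp_add_right a).const_mul _)
    refine hg.mono' ?_ ?_
    · exact ((continuous_norm.pow 2).aestronglyMeasurable).mul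
        (h1.comp_add_right a).aestronglyMeasurable
    · filter_upwards with x
      have hx : ‖x‖ ≤ ‖x + a‖ + ‖a‖ := by
        simpa using norm_add_le (x + a) (-a)
      have h0 : (0:ℝ) ≤ ψ (x + a) ^ 2 := sq_nonneg _
      have hb : ‖x‖ ^ 2 ≤ 2 * ‖x + a‖ ^ 2 + 2 * ‖a‖ ^ 2 := by
        nlinarith [norm_nonneg x, norm_nonneg (x + a), norm_nonneg a,
          sq_nonneg (‖x + a‖ - ‖a‖)]
      rw [Real.norm_eq_abs, abs_of_nonneg (by positivity)]
      nlinarith [mul_le_mul_of_nonneg_right hb h0]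

lemma integrable_fitness_sq (A αv : ℝ) (m : Rn n) {ψ : Rn n → ℝ} (hψ : memE ψ) :
    Integrable (fun x => fitness A αv m x * ψ x ^ 2) := by
  obtain ⟨h1, h2, h3⟩ := hψ
  have hg : Integrable (fun x : Rn n =>
      (|A| + |αv| * ‖m‖ ^ 2) * ψ x ^ 2 + |αv| * (‖x‖ ^ 2 * ψ x ^ 2)) :=
    (h1.const_mul _).add (h3.const_mul _)
  refine hg.mono' ?_ ?_
  · have hc : Continuous (fun x : Rn n => fitness A αv m x) := by
      unfold fitness; fun_prop
    exact hc.aestronglyMeasurable.mul h1.aestronglyMeasurable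
  · filter_upwards with x
    have hx : ‖x - m‖ ^ 2 ≤ 2 * ‖x‖ ^ 2 + 2 * ‖m‖ ^ 2 := by
      have h := norm_sub_le x m
      nlinarith [norm_nonneg (x - m), norm_nonneg x, norm_nonneg m, sq_nonneg (‖x‖ - ‖m‖)]
    have h0 : (0:ℝ) ≤ ψ x ^ 2 := sq_nonneg _
    have ht : (0:ℝ) ≤ ‖x - m‖ ^ 2 := sq_nonneg _
    have hf : |fitness A αv m x| ≤ |A| + |αv| * ‖m‖ ^ 2 + |αv| * ‖x‖ ^ 2 := by
      simp only [fitness]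
      rcases abs_cases (A - αv / 2 * ‖x - m‖ ^ 2) with ⟨he, _⟩ | ⟨he, _⟩ <;>
        rcases abs_cases αv with ⟨ha, _⟩ | ⟨ha, _⟩ <;>
        rcases abs_cases A with ⟨hA, _⟩ | ⟨hA, _⟩ <;>
        nlinarith [mul_le_mul_of_nonneg_left hx (abs_nonneg αv),
          mul_nonneg (abs_nonneg αv) ht]
    rw [Real.norm_eq_abs, abs_mul, abs_of_nonneg h0]
    nlinarith [mul_le_mul_of_nonneg_right hf h0]

lemma Q1_shift (A αv μ : ℝ) (m : Rn n) {ψ : Rn n → ℝ} (hψ : memE ψ)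
    (hnorm : (∫ x, ψ x ^ 2) = 1) :
    Q1 μ (fitness A αv m) ψ = Q1 μ (fitness 0 αv 0) (fun y => ψ (y + m)) - A := by
  have hgrad : (∫ x, ‖gradient (fun y => ψ (y + m)) x‖ ^ 2) = ∫ x, ‖gradient ψ x‖ ^ 2 := by
    have he : (fun x => ‖gradient (fun y => ψ (y + m)) x‖ ^ 2)
        = fun x => (fun z => ‖gradient ψ z‖ ^ 2) (x + m) := by
      funext x; rw [gradient_comp_add']
    rw [he]
    exact integral_add_right_eq_self (fun z => ‖gradient ψ z‖ ^ 2) m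
  have hpt : (fun y => fitness 0 αv 0 y * ψ (y + m) ^ 2)
      = fun y => (fun x => fitness A αv m x * ψ x ^ 2 - A * ψ x ^ 2) (y + m) := by
    funext y
    have he : fitness 0 αv 0 y = fitness A αv m (y + m) - A := by
      simp only [fitness, sub_zero, add_sub_cancel_right]; ring
    simp only [he]; ring
  have hint : (∫ y, fitness 0 αv 0 y * ψ (y + m) ^ 2)
      = (∫ x, fitness A αv m x * ψ x ^ 2) - A := by
    rw [hpt,
      integral_add_right_eq_self (fun x => fitness A αv m x * ψ x ^ 2 - A * ψ x ^ 2) m,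
      integral_sub (integrable_fitness_sq A αv m hψ) (hψ.1.const_mul A),
      integral_const_mul, hnorm, mul_one]
  unfold Q1
  rw [hgrad, hint]
  ring

lemma exists_memE_norm_one : ∃ ψ : Rn n → ℝ, memE ψ ∧ (∫ x, ψ x ^ 2) = 1 := by
  classical
  set b : ContDiffBump (0 : Rn n) := ⟨1, 2, one_pos, one_lt_two⟩ with hb
  have hbsq_cs : HasCompactSupport (fun x : Rn n => b x ^ 2) :=
    b.hasCompactSupport.comp_left (g := fun t : ℝ => t ^ 2) (by simp)
  have hbsq_cont : Continuous (fun x : Rn n => b x ^ 2) := b.continuous.pow 2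
  have hbsq_int : Integrable (fun x : Rn n => b x ^ 2) :=
    hbsq_cont.integrable_of_hasCompactSupport hbsq_cs
  set I₀ : ℝ := ∫ x : Rn n, b x ^ 2 with hI₀
  have hI₀pos : 0 < I₀ := by
    rw [hI₀, integral_pos_iff_support_of_nonneg (fun x => sq_nonneg _) hbsq_int]
    have hsupp : Function.support (fun x : Rn n => b x ^ 2) = Metric.ball 0 b.rOut := by
      rw [← b.support_eq]
      ext x
      simp [Function.mem_support, pow_eq_zero_iff]
    rw [hsupp]
    exact Metric.measure_ball_pos _ _ b.rOut_pos
  set k : ℝ := (Real.sqrt I₀)⁻¹ with hk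
  refine ⟨fun x => k * b x, ?_, ?_⟩
  · -- memE
    have hcd : ContDiff ℝ 1 (fun x : Rn n => k * b x) :=
      contDiff_const.mul b.contDiff
    have hcs : HasCompactSupport (fun x : Rn n => k * b x) :=
      b.hasCompactSupport.comp_left (g := fun t : ℝ => k * t) (by simp)
    set ψ : Rn n → ℝ := fun x => k * b x with hψdef
    have hψsq_cs : HasCompactSupport (fun x : Rn n => ψ x ^ 2) :=
      hcs.comp_left (g := fun t : ℝ => t ^ 2) (by simp)
    have hψsq_cont : Continuous (fun x : Rn n => ψ x ^ 2) := (hcd.continuous).pow 2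
    have hψsq_int : Integrable (fun x : Rn n => ψ x ^ 2) :=
      hψsq_cont.integrable_of_hasCompactSupport hψsq_cs
    refine ⟨hψsq_int, ?_, ?_⟩
    · have hfd_cont : Continuous (fderiv ℝ ψ) := hcd.continuous_fderiv one_ne_zero
      have hgrad_cont : Continuous (fun x : Rn n => gradient ψ x) := by
        exact (InnerProductSpace.toDual ℝ (Rn n)).symm.continuous.comp hfd_cont
      have hfd_cs : HasCompactSupport (fderiv ℝ ψ) := hcs.fderiv ℝ
      have hgn_cs : HasCompactSupport (fun x : Rn n => ‖gradient ψ x‖ ^ 2) :=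
        hfd_cs.comp_left
          (g := fun L : Rn n →L[ℝ] ℝ => ‖(InnerProductSpace.toDual ℝ (Rn n)).symm L‖ ^ 2)
          (by simp)
      exact ((hgrad_cont.norm.pow 2)).integrable_of_hasCompactSupport hgn_cs
    · have hc : Continuous (fun x : Rn n => ‖x‖ ^ 2 * ψ x ^ 2) :=
        (continuous_norm.pow 2).mul hψsq_cont
      have hcs2 : HasCompactSupport (fun x : Rn n => ‖x‖ ^ 2 * ψ x ^ 2) :=
        hψsq_cs.mul_left
      exact hc.integrable_of_hasCompactSupport hcs2
  · have he : (fun x : Rn n => (k * b x) ^ 2) = fun x => k ^ 2 * b x ^ 2 := by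
      funext x; ring
    rw [he, integral_const_mul, ← hI₀, hk]
    rw [← Real.sq_sqrt hI₀pos.le]
    have hs : (0:ℝ) < Real.sqrt I₀ := Real.sqrt_pos.mpr hI₀pos
    field_simp
    rw [Real.sqrt_sq hs.le]

lemma lambdaSingle_fitness (A αv μ : ℝ) (hα : 0 < αv) (m : Rn n) :
    lambdaSingle μ (fitness A αv m) = lambdaSingle μ (fitness 0 αv (0 : Rn n)) - A := by
  have hset : {Q : ℝ | ∃ ψ : Rn n → ℝ, memE ψ ∧ (∫ x, (ψ x) ^ 2) = 1 ∧
        Q = Q1 μ (fitness A αv m) ψ}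
      = (fun q => q - A) '' {Q : ℝ | ∃ ψ : Rn n → ℝ, memE ψ ∧ (∫ x, (ψ x) ^ 2) = 1 ∧
        Q = Q1 μ (fitness 0 αv 0) ψ} := by
    ext q
    constructor
    · rintro ⟨ψ, h1, h2, rfl⟩
      refine ⟨Q1 μ (fitness 0 αv 0) (fun y => ψ (y + m)),
        ⟨fun y => ψ (y + m), memE_comp_add h1 m, ?_, rfl⟩, ?_⟩
      · exact (integral_add_right_eq_self (fun x => ψ x ^ 2) m).trans h2
      · exact (Q1_shift A αv μ m h1 h2).symm
    · rintro ⟨p, ⟨φ, h1, h2, rfl⟩, rfl⟩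
      have hnorm' : (∫ x, φ (x + -m) ^ 2) = 1 :=
        (integral_add_right_eq_self (fun x => φ x ^ 2) (-m)).trans h2
      refine ⟨fun x => φ (x + -m), memE_comp_add h1 (-m), hnorm', ?_⟩
      have hφ : (fun y => (fun x => φ (x + -m)) (y + m)) = φ := by
        funext y; simp
      rw [Q1_shift A αv μ m (memE_comp_add h1 (-m)) hnorm', hφ]
  have hne : Set.Nonempty {Q : ℝ | ∃ ψ : Rn n → ℝ, memE ψ ∧ (∫ x, (ψ x) ^ 2) = 1 ∧
      Q = Q1 μ (fitness 0 αv 0) ψ} := by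
    obtain ⟨ψ, hψ, hnorm⟩ := exists_memE_norm_one (n := n)
    exact ⟨_, ψ, hψ, hnorm, rfl⟩
  have hbdd : BddBelow {Q : ℝ | ∃ ψ : Rn n → ℝ, memE ψ ∧ (∫ x, (ψ x) ^ 2) = 1 ∧
      Q = Q1 μ (fitness 0 αv 0) ψ} := by
    refine ⟨0, ?_⟩
    rintro Q ⟨ψ, h1, h2, rfl⟩
    have hI : 0 ≤ ∫ x, ‖gradient ψ x‖ ^ 2 := integral_nonneg fun x => sq_nonneg _
    have hJ : (∫ x, fitness 0 αv 0 x * ψ x ^ 2) ≤ 0 := by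
      apply integral_nonpos
      intro x
      have hf : fitness 0 αv 0 x ≤ 0 := by
        simp only [fitness, sub_zero, zero_sub, neg_nonpos]
        positivity
      have := mul_le_mul_of_nonneg_right hf (sq_nonneg (ψ x))
      simpa using this
    unfold Q1
    nlinarith [mul_nonneg (by positivity : (0:ℝ) ≤ μ ^ 2 / 2) hI]
  unfold lambdaSingle
  rw [hset]
  exact (Monotone.map_csInf_of_continuousAt (f := fun q : ℝ => q - A)
    (continuous_id.sub continuous_const).continuousAt
    (fun a b hab => by simpa using sub_le_sub_right hab A) hne hbdd).symm

end Aux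

/-- **region of higher persistence for large migration is a ball.** -/
theorem statement10 (n : ℕ) (hn : 0 < n)
    (rmax α μ β : ℝ) (hα : 0 < α) (hμ : 0 < μ) (hβ : 0 < β)
    (O1 O2 : Rn n)
    (hO1 : O1 = EuclideanSpace.single ⟨0, hn⟩ (-β))
    (hO2 : O2 = EuclideanSpace.single ⟨0, hn⟩ β)
    (O3 : Rn n) :
    lambdaSingle μ (fun x =>
        (fitness rmax α O1 x + fitness rmax α O2 x + fitness rmax α O3 x) / 3) <
      lambdaSingle μ (fun x => (fitness rmax α O1 x + fitness rmax α O2 x) / 2) ↔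
    ‖O3‖ < Real.sqrt (3 / 2) * β := by
  have hO12 : O1 = -O2 := by
    rw [hO1, hO2]
    ext j
    by_cases h : j = ⟨0, hn⟩ <;> simp [EuclideanSpace.single_apply, h]
  have hO2n : ‖O2‖ ^ 2 = β ^ 2 := by
    rw [hO2, EuclideanSpace.norm_single, Real.norm_eq_abs, sq_abs]
  have hO1n : ‖O1‖ ^ 2 = β ^ 2 := by rw [hO12, norm_neg, hO2n]
  have hi : ∀ x : Rn n, (inner ℝ x O1 : ℝ) = -(inner ℝ x O2 : ℝ) := by
    intro x; rw [hO12, inner_neg_right]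
  have e2 : (fun x : Rn n => (fitness rmax α O1 x + fitness rmax α O2 x) / 2)
      = fitness (rmax - α * β ^ 2 / 2) α (0 : Rn n) := by
    funext x
    simp only [fitness, sub_zero]
    rw [norm_sub_sq_real, norm_sub_sq_real, hi x, hO1n, hO2n]
    ring
  have e3 : (fun x : Rn n =>
        (fitness rmax α O1 x + fitness rmax α O2 x + fitness rmax α O3 x) / 3)
      = fitness (rmax - α * β ^ 2 / 3 - α * ‖O3‖ ^ 2 / 9) α ((3:ℝ)⁻¹ • O3) := by
    funext x
    have hs : (inner ℝ x ((3:ℝ)⁻¹ • O3) : ℝ) = (3:ℝ)⁻¹ * (inner ℝ x O3 : ℝ) :=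
      real_inner_smul_right x O3 _
    have hns : ‖(3:ℝ)⁻¹ • O3‖ ^ 2 = (3:ℝ)⁻¹ ^ 2 * ‖O3‖ ^ 2 := by
      rw [norm_smul, mul_pow, Real.norm_eq_abs]
      norm_num
    simp only [fitness]
    rw [norm_sub_sq_real, norm_sub_sq_real, norm_sub_sq_real, norm_sub_sq_real, hi x, hO1n, hO2n, hs, hns]
    ring
  rw [e2, e3,
    lambdaSingle_fitness (rmax - α * β ^ 2 / 3 - α * ‖O3‖ ^ 2 / 9) α μ hα ((3:ℝ)⁻¹ • O3),
    lambdaSingle_fitness (rmax - α * β ^ 2 / 2) α μ hα (0 : Rn n)]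
  have hsq : Real.sqrt (3 / 2) * β = Real.sqrt (3 / 2 * β ^ 2) := by
    rw [Real.sqrt_mul (by norm_num : (0:ℝ) ≤ 3 / 2), Real.sqrt_sq hβ.le]
  rw [hsq, Real.lt_sqrt (norm_nonneg O3)]
  constructor
  · intro h
    have hc : 0 < α * (3 / 2 * β ^ 2 - ‖O3‖ ^ 2) := by nlinarith [h]
    rcases mul_pos_iff.mp hc with ⟨_, hpos⟩ | ⟨hneg, _⟩
    · linarith
    · linarith
  · intro h
    nlinarith [mul_lt_mul_of_pos_left h hα]

end MigrationAdaptation
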